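/- Let 𝒜 be a finite set, let η : 𝒜 → ℝ_{>0}, and let ψ(p) = Σ_{a∈𝒜} (1/η(a)) ln(1/p(a)) (the log barrier regularizer with coordinate-wise learning rates). Let p_t ∈ Δ(𝒜) with p_t(a) > 0 for every a, and let ℓ ∈ ℝ^𝒜 satisfy η(a) p_t(a) ℓ(a) ≥ −1/2 for every a. Then max_{p ∈ Δ(𝒜)} { ⟨p_t − p, ℓ⟩ − D_ψ(p, p_t) } ≤ Σ_{a∈𝒜} η(a) p_t(a)² ℓ(a)². -/

import Mathlib

open Finset

/-- **Stability under the log barrier regularizer.**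
Let `ψ p = ∑ a, (1 / η a) * log (1 / p a)` with coordinate-wise learning rates
`η a > 0`, let `pt` be a point of the probability simplex with strictly positive
coordinates, and let `ℓ` satisfy `η a * pt a * ℓ a ≥ -1/2` for every `a`.  Then for
every `p` in the probability simplex (with strictly positive coordinates, where `ψ`
is defined),
`⟨pt - p, ℓ⟩ - D_ψ(p, pt) ≤ ∑ a, η a * (pt a)² * (ℓ a)²`, where
`D_ψ(p, pt) = ψ p - ψ pt - ⟨∇ψ(pt), p - pt⟩`. -/


lemma log_one_add_ge (c : ℝ) (hc : -(1/2) ≤ c) : c - c^2 ≤ Real.log (1 + c) := by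
  set g : ℝ → ℝ := fun x => Real.log (1+x) - x + x^2 with hg
  have hd : ∀ x : ℝ, -1 < x → HasDerivAt g ((1+x)⁻¹ - 1 + 2*x) x := by
    intro x hx
    have h1 : HasDerivAt (fun y : ℝ => 1 + y) 1 x := by
      simpa using (hasDerivAt_id x).const_add (1:ℝ)
    have h2 : HasDerivAt (fun y : ℝ => Real.log (1+y)) ((1+x)⁻¹ * 1) x :=
      (Real.hasDerivAt_log (by linarith)).comp x h1
    have h3 : HasDerivAt (fun y : ℝ => y^2) (2*x) x := by
      simpa using (hasDerivAt_pow 2 x)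
    have := (h2.sub (hasDerivAt_id x)).add h3
    refine this.congr_deriv ?_
    ring
  have hg0 : g 0 = 0 := by simp [hg]
  rcases le_or_gt 0 c with h0 | h0
  · have hmono : MonotoneOn g (Set.Ici (0:ℝ)) := by
      apply monotoneOn_of_deriv_nonneg (convex_Ici 0)
      · intro x hx
        exact ((hd x (by simp at hx; linarith)).differentiableAt).continuousAt.continuousWithinAt
      · intro x hx
        simp only [interior_Ici, Set.mem_Ioi] at hx
        exact ((hd x (by linarith)).differentiableAt).differentiableWithinAt
      · intro x hx
        simp only [interior_Ici, Set.mem_Ioi] at hx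
        rw [(hd x (by linarith)).deriv]
        have h1x : (0:ℝ) < 1 + x := by linarith
        have key : ((1+x)⁻¹ - 1 + 2*x) * (1+x) = x*(1+2*x) := by field_simp; ring
        nlinarith [mul_pos hx (by linarith : (0:ℝ) < 1 + 2*x)]
    have := hmono (Set.mem_Ici.2 le_rfl) (Set.mem_Ici.2 h0) h0
    rw [hg0] at this
    simp only [hg] at this
    nlinarith
  · have hmono : AntitoneOn g (Set.Icc (-(1/2):ℝ) 0) := by
      apply antitoneOn_of_deriv_nonpos (convex_Icc _ _)
      · intro x hx
        simp only [Set.mem_Icc] at hx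
        exact ((hd x (by linarith [hx.1])).differentiableAt).continuousAt.continuousWithinAt
      · intro x hx
        rw [interior_Icc, Set.mem_Ioo] at hx
        exact ((hd x (by linarith [hx.1])).differentiableAt).differentiableWithinAt
      · intro x hx
        rw [interior_Icc, Set.mem_Ioo] at hx
        rw [(hd x (by linarith [hx.1])).deriv]
        have h1x : (0:ℝ) < 1 + x := by linarith [hx.1]
        have key : ((1+x)⁻¹ - 1 + 2*x) * (1+x) = x*(1+2*x) := by field_simp; ring
        nlinarith [hx.1, hx.2]
    have := hmono (Set.mem_Icc.2 ⟨hc, le_of_lt h0⟩) (Set.mem_Icc.2 ⟨by norm_num, le_rfl⟩) (le_of_lt h0)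
    rw [hg0] at this
    simp only [hg] at this
    nlinarith

lemma core_ineq (c x : ℝ) (hc : -(1/2) ≤ c) (hx : 0 < x) :
    c * (1 - x) - (x - 1 - Real.log x) ≤ c^2 := by
  have h1c : (0:ℝ) < 1 + c := by linarith
  have hlog : Real.log x ≤ x * (1+c) - 1 - Real.log (1+c) := by
    have h := Real.log_le_sub_one_of_pos (mul_pos hx h1c)
    rw [Real.log_mul (ne_of_gt hx) (ne_of_gt h1c)] at h
    linarith
  have h2 := log_one_add_ge c hc
  nlinarith

theorem log_barrier_stability
    {𝒜 : Type*} [Fintype 𝒜]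
    (η : 𝒜 → ℝ) (hη : ∀ a, 0 < η a)
    (ψ : (𝒜 → ℝ) → ℝ)
    (hψ : ψ = fun p : 𝒜 → ℝ => ∑ a, (1 / η a) * Real.log (1 / p a))
    (pt : 𝒜 → ℝ) (hpt_pos : ∀ a, 0 < pt a) (hpt_sum : ∑ a, pt a = 1)
    (ℓ : 𝒜 → ℝ) (hℓ : ∀ a, η a * pt a * ℓ a ≥ -(1 / 2)) :
    ∀ p : 𝒜 → ℝ, (∀ a, 0 < p a) → ∑ a, p a = 1 →
      (∑ a, (pt a - p a) * ℓ a) - (ψ p - ψ pt - fderiv ℝ ψ pt (p - pt))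
        ≤ ∑ a, η a * pt a ^ 2 * ℓ a ^ 2 := by
  have hψ' : ψ = fun p : 𝒜 → ℝ => ∑ a, -((1 / η a) * Real.log (p a)) := by
    rw [hψ]; funext p
    refine Finset.sum_congr rfl fun a _ => ?_
    rw [one_div (p a), Real.log_inv]; ring
  intro p hp_pos hp_sum
  -- derivative of ψ at pt
  set L : (𝒜 → ℝ) →L[ℝ] ℝ :=
    ∑ a, (-(1 / η a)) • (((pt a)⁻¹) • (ContinuousLinearMap.proj (R := ℝ) (φ := fun _ : 𝒜 => ℝ) a))
    with hLdef
  have hL : HasFDerivAt ψ L pt := by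
    rw [hψ']
    apply HasFDerivAt.fun_sum
    intro a _
    have hproj := (ContinuousLinearMap.proj (R := ℝ) (φ := fun _ : 𝒜 => ℝ) a).hasFDerivAt (x := pt)
    have hlog : HasFDerivAt (fun q : 𝒜 → ℝ => Real.log (q a))
        (((pt a)⁻¹) • (ContinuousLinearMap.proj (R := ℝ) (φ := fun _ : 𝒜 => ℝ) a)) pt := by
      have h := (Real.hasDerivAt_log (by
        simpa using (ne_of_gt (hpt_pos a)))).comp_hasFDerivAt pt hproj
      exact h
    have h2 := hlog.const_smul (-(1 / η a))
    have heq : (fun q : 𝒜 → ℝ => -((1 / η a) * Real.log (q a)))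
        = fun q : 𝒜 → ℝ => (-(1 / η a)) • Real.log (q a) := by
      funext q; simp [smul_eq_mul]
    rw [heq]
    exact h2
  have hfd : fderiv ℝ ψ pt = L := hL.fderiv
  have hLapp : L (p - pt) = ∑ a, -(1 / η a) * ((pt a)⁻¹ * (p a - pt a)) := by
    simp [hLdef, ContinuousLinearMap.sum_apply, ContinuousLinearMap.smul_apply,
      ContinuousLinearMap.proj_apply, smul_eq_mul, mul_assoc]
  rw [hfd, hLapp, hψ']
  simp only
  rw [← Finset.sum_sub_distrib, ← Finset.sum_sub_distrib, ← Finset.sum_sub_distrib]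
  apply Finset.sum_le_sum
  intro a _
  have hηa := hη a
  have hpta := hpt_pos a
  have hpa := hp_pos a
  have hx : 0 < p a / pt a := div_pos hpa hpta
  have hcore := core_ineq (η a * pt a * ℓ a) (p a / pt a) (by linarith [hℓ a]) hx
  rw [Real.log_div (ne_of_gt hpa) (ne_of_gt hpta)] at hcore
  have e1 : (pt a - p a) * ℓ a -
      (-((1 / η a) * Real.log (p a)) - -((1 / η a) * Real.log (pt a)) -
        -(1 / η a) * ((pt a)⁻¹ * (p a - pt a)))
      = (1 / η a) * (η a * pt a * ℓ a * (1 - p a / pt a)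
          - (p a / pt a - 1 - (Real.log (p a) - Real.log (pt a)))) := by
    field_simp
    ring
  have e2 : η a * pt a ^ 2 * ℓ a ^ 2 = (1 / η a) * (η a * pt a * ℓ a)^2 := by
    field_simp
  rw [e1, e2]
  exact mul_le_mul_of_nonneg_left hcore (by positivity)
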